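/- Let q be a prime power, let l_1, l_2, ..., l_t be distinct odd primes coprime to q, let r_1, ..., r_t be positive integers, and for each i write ord_{l_i}(q) = 2^{a_i} d_i with a_i ≥ 0 an integer and d_i an odd positive integer. If there exists j ∈ {1, ..., t} such that a_j = 0 or a_j ≥ 2, then |Ω_{q^2, ∏_{i=1}^t l_i^{r_i}}| = |Ω_{q^2, ∏_{i≠j} l_i^{r_i}}| (the empty product being 1). -/

import Mathlib

open Polynomial

/-- The reciprocal polynomial `f*(x) = x^(deg f) * f(0)⁻¹ * f(1/x)`. -/
noncomputable def crecip {F : Type*} [Field F] (f : F[X]) : F[X] :=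
  C (f.coeff 0)⁻¹ * f.reverse

/-- The conjugate-reciprocal polynomial `f†`, obtained by applying the
conjugation `a ↦ a ^ q` to each coefficient of `f*`. -/
noncomputable def cdagger {F : Type*} [Field F] (q : ℕ) (f : F[X]) : F[X] :=
  (crecip f).sum fun i a => C (a ^ q) * X ^ i

/-- A polynomial is SCRIM if it is monic, irreducible, and self-conjugate-reciprocal. -/
def IsSCRIM {F : Type*} [Field F] (q : ℕ) (f : F[X]) : Prop :=
  f.Monic ∧ Irreducible f ∧ f = cdagger q f

/-- The set `Ω_{q²,n}` of SCRIM factors of `x^n - 1` over `F = F_{q²}`. -/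
def scrimFactors (F : Type*) [Field F] (q n : ℕ) : Set F[X] :=
  {f | IsSCRIM q f ∧ f ∣ X ^ n - 1}

lemma notdvd {q l ad d e : ℕ} (hl : l.Prime) (hlodd : Odd l)
    (hord : orderOf ((q : ZMod l)) = 2 ^ ad * d) (hd : Odd d) (hj : ad = 0 ∨ 2 ≤ ad)
    (he : Odd e) (hdvd : l ∣ q ^ e + 1) : False := by
  haveI : Fact l.Prime := ⟨hl⟩
  have hl3 : 3 ≤ l := by
    obtain ⟨c, hc⟩ := hlodd
    have := hl.two_le
    omega
  haveI : Fact (2 < l) := ⟨by omega⟩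
  have hcast : ((q : ZMod l)) ^ e = -1 := by
    have h0 : ((q ^ e + 1 : ℕ) : ZMod l) = 0 := (ZMod.natCast_eq_zero_iff _ _).mpr hdvd
    push_cast at h0
    linear_combination h0
  have h2e : orderOf ((q : ZMod l)) ∣ 2 * e := by
    apply orderOf_dvd_of_pow_eq_one
    rw [mul_comm, pow_mul, hcast]
    ring
  have hne : ¬ orderOf ((q : ZMod l)) ∣ e := by
    intro h
    rw [orderOf_dvd_iff_pow_eq_one, hcast] at h
    exact CharP.neg_one_ne_one (ZMod l) l h
  rcases hj with h0 | h2
  · rw [h0, pow_zero, one_mul] at hord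
    apply hne
    rw [hord] at h2e ⊢
    have hcop : Nat.Coprime d 2 := (Nat.coprime_two_right).mpr hd
    exact hcop.dvd_of_dvd_mul_left h2e
  · have h4 : 4 ∣ orderOf ((q : ZMod l)) := by
      rw [hord]
      exact Dvd.dvd.mul_right (by
        have : (4:ℕ) = 2 ^ 2 := rfl
        rw [this]
        exact pow_dvd_pow 2 h2) d
    have : (4:ℕ) ∣ 2 * e := h4.trans h2e
    obtain ⟨c, hc⟩ := he
    omega

lemma charF {q p k : ℕ} (hp : p.Prime) (hpk : p ^ k = q)
    {F : Type*} [Field F] [Fintype F] (hF : Fintype.card F = q ^ 2) : CharP F p := by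
  obtain ⟨c, hc⟩ := CharP.exists F
  obtain ⟨n, hcprime, hcard⟩ := FiniteField.card F c
  have h1 : c ^ (n : ℕ) = p ^ (2 * k) := by
    rw [← hcard, hF, ← hpk, ← pow_mul, mul_comm k 2]
  have hcp : c = p :=
    (Nat.prime_dvd_prime_iff_eq hcprime hp).mp
      (hcprime.dvd_of_dvd_pow (h1 ▸ dvd_pow_self c n.ne_zero))
  rwa [hcp] at hc

lemma map_eq_sum' {F : Type*} [Field F] (φ : F →+* F) (g : F[X]) :
    g.map φ = g.sum fun i a => C (φ a) * X ^ i := by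
  rw [← eval₂_C_X (p := g.map φ), eval₂_map, eval₂_eq_sum]
  rfl

lemma cdagger_eq_map {q p k : ℕ} [Fact p.Prime] (hpk : p ^ k = q)
    {F : Type*} [Field F] [CharP F p] (f : F[X]) :
    cdagger q f = (crecip f).map (iterateFrobenius F p k) := by
  rw [map_eq_sum']
  unfold cdagger
  congr 1
  ext i a
  rw [iterateFrobenius_def, hpk]

lemma aeval_map_frob {F K : Type*} [Field F] [Field K] [Algebra F K]
    (φ : F →+* F) (ψ : K →+* K)
    (h : ∀ c, algebraMap F K (φ c) = ψ (algebraMap F K c)) (g : F[X]) (z : K) :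
    aeval (ψ z) (g.map φ) = ψ (aeval z g) := by
  rw [aeval_def, eval₂_map, aeval_def, hom_eval₂]
  congr 1
  ext c
  simp [h]

lemma core {q : ℕ} (hq : IsPrimePow q) {F : Type*} [Field F] [Fintype F]
    (hF : Fintype.card F = q ^ 2) {n : ℕ} (hn : 0 < n) (hnq : Nat.Coprime n q)
    {f : F[X]} (hmon : f.Monic) (hirr : Irreducible f) (hdag : f = cdagger q f)
    (hdvd : f ∣ X ^ n - 1) :
    ∃ m, m ∣ n ∧ (∃ e, Odd e ∧ m ∣ q ^ e + 1) ∧ f ∣ (X ^ m - 1 : F[X]) := by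
  obtain ⟨p, k, hpp, hk, hpk⟩ := hq
  have hp : p.Prime := hpp.nat_prime
  haveI : Fact p.Prime := ⟨hp⟩
  haveI : CharP F p := charF hp hpk hF
  have hq2 : 2 ≤ q := by
    calc 2 ≤ p := hp.two_le
    _ = p ^ 1 := (pow_one p).symm
    _ ≤ p ^ k := Nat.pow_le_pow_right hp.pos hk
    _ = q := hpk
  have hQ1 : 1 < q ^ 2 := by nlinarith
  haveI : Fact (Irreducible f) := ⟨hirr⟩
  set K := AdjoinRoot f with hK
  haveI : CharP K p := charP_of_injective_algebraMap (algebraMap F K).injective p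
  haveI : Module.Finite F K := Module.Finite.of_basis (AdjoinRoot.powerBasisAux' hmon)
  haveI : Finite K := Module.finite_of_finite F
  haveI : Fintype K := Fintype.ofFinite K
  set s := f.natDegree with hs
  have hs0 : 0 < s := hirr.natDegree_pos
  have cardK : Fintype.card K = (q ^ 2) ^ s := by
    rw [Module.card_eq_pow_finrank (K := F) (V := K), hF,
      Module.finrank_eq_card_basis (AdjoinRoot.powerBasisAux' hmon), Fintype.card_fin]
  set α : K := AdjoinRoot.root f with hα
  have hαf : aeval α f = 0 := by
    rw [aeval_def]; exact AdjoinRoot.eval₂_root f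
  have hαn : α ^ n = 1 := by
    obtain ⟨c, hc⟩ := hdvd
    have h2 := congrArg (aeval α) hc
    simp only [map_sub, map_pow, aeval_X, map_one, map_mul, hαf, zero_mul] at h2
    linear_combination h2
  have hα0 : α ≠ 0 := by
    intro h
    rw [h, zero_pow hn.ne'] at hαn
    exact zero_ne_one hαn
  -- Frobenius fixes aeval computations
  have hfix : ∀ (g : F[X]) (z : K), aeval (z ^ q ^ 2) g = (aeval z g) ^ q ^ 2 := by
    intro g z
    have hφ2 : iterateFrobenius F p (2 * k) = RingHom.id F := by
      ext c
      rw [iterateFrobenius_def, mul_comm 2 k, pow_mul, hpk, ← hF, FiniteField.pow_card,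
        RingHom.id_apply]
    have hcomm : ∀ c, algebraMap F K ((iterateFrobenius F p (2 * k)) c)
        = (iterateFrobenius K p (2 * k)) (algebraMap F K c) := by
      intro c
      rw [hφ2, RingHom.id_apply, iterateFrobenius_def, ← map_pow, mul_comm 2 k, pow_mul, hpk,
        ← hF, FiniteField.pow_card]
    have h3 := aeval_map_frob (iterateFrobenius F p (2 * k)) (iterateFrobenius K p (2 * k))
      hcomm g z
    rw [hφ2, Polynomial.map_id] at h3
    rw [iterateFrobenius_def, mul_comm 2 k, pow_mul, hpk] at h3
    rw [h3, iterateFrobenius_def, pow_mul, hpk]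
  -- β is a root of f
  haveI : Invertible α := invertibleOfNonzero hα0
  have hrev : aeval α⁻¹ (crecip f) = 0 := by
    have h4 : eval₂ (algebraMap F K) (⅟ α) (reverse f) = 0 := by
      rw [eval₂_reverse_eq_zero_iff, ← aeval_def]
      exact hαf
    rw [invOf_eq_inv] at h4
    have h4' : aeval α⁻¹ (reverse f) = 0 := by rw [aeval_def]; exact h4
    simp [crecip, h4']
  have hβf : aeval (α⁻¹ ^ q) f = 0 := by
    have hcommK : ∀ c, algebraMap F K ((iterateFrobenius F p k) c)
        = (iterateFrobenius K p k) (algebraMap F K c) := by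
      intro c
      rw [iterateFrobenius_def, iterateFrobenius_def, map_pow]
    have h5 := aeval_map_frob (iterateFrobenius F p k) (iterateFrobenius K p k)
      hcommK (crecip f) α⁻¹
    rw [hrev, map_zero, ← cdagger_eq_map hpk, iterateFrobenius_def, hpk] at h5
    exact (congrArg (aeval (α⁻¹ ^ q)) hdag).trans h5
  -- no small Frobenius fixed exponent
  have hfixbound : ∀ d : ℕ, 0 < d → d < s → α ^ (q ^ 2) ^ d ≠ α := by
    intro d hd hds heq
    have hE : p ^ (2 * k * d) = (q ^ 2) ^ d := by
      rw [show 2 * k * d = k * (2 * d) by ring, pow_mul, hpk, pow_mul]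
    have hΨc : ∀ c : F, algebraMap F K c ^ (q ^ 2) ^ d = algebraMap F K c := by
      intro c
      rw [← map_pow, ← hF, FiniteField.pow_card_pow]
    have hall : ∀ x : K, x ^ (q ^ 2) ^ d = x := by
      intro x
      have hx : x ∈ Algebra.adjoin F ({AdjoinRoot.root f} : Set K) := by
        rw [AdjoinRoot.adjoinRoot_eq_top]; trivial
      induction hx using Algebra.adjoin_induction with
      | mem y hy =>
        rw [Set.mem_singleton_iff] at hy
        rw [hy]
        exact heq
      | algebraMap r => exact hΨc r
      | add y z _ _ hy hz =>
        rw [← hE, add_pow_char_pow, hE, hy, hz]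
      | mul y z _ _ hy hz => rw [mul_pow, hy, hz]
    -- counting contradiction
    have hpn : (1:ℕ) < q ^ 2 := hQ1
    have hgne : (X ^ (q ^ 2) ^ d - X : K[X]) ≠ 0 :=
      FiniteField.X_pow_card_pow_sub_X_ne_zero K hd.ne' hpn
    have hdeg : (X ^ (q ^ 2) ^ d - X : K[X]).natDegree = (q ^ 2) ^ d :=
      FiniteField.X_pow_card_pow_sub_X_natDegree_eq K hd.ne' hpn
    have hsub : (Finset.univ : Finset K) ⊆ (X ^ (q ^ 2) ^ d - X : K[X]).roots.toFinset := by
      intro x _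
      rw [Multiset.mem_toFinset, mem_roots hgne]
      simp [IsRoot, hall x]
    have hcount : Fintype.card K ≤ (q ^ 2) ^ d := by
      calc Fintype.card K = (Finset.univ : Finset K).card := rfl
        _ ≤ (X ^ (q ^ 2) ^ d - X : K[X]).roots.toFinset.card := Finset.card_le_card hsub
        _ ≤ Multiset.card (X ^ (q ^ 2) ^ d - X : K[X]).roots := Multiset.toFinset_card_le _
        _ ≤ (X ^ (q ^ 2) ^ d - X : K[X]).natDegree := card_roots' _
        _ = (q ^ 2) ^ d := hdeg
    rw [cardK] at hcount
    exact absurd hcount (not_le.mpr (Nat.pow_lt_pow_right hQ1 hds))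
  -- injectivity of the Frobenius orbit below s
  have hcardpow : α ^ (q ^ 2) ^ s = α := by
    rw [← cardK]
    exact FiniteField.pow_card α
  have hinj : ∀ i j : ℕ, i < s → j < s → α ^ (q ^ 2) ^ i = α ^ (q ^ 2) ^ j → i = j := by
    have key : ∀ i j : ℕ, i < s → j < s → i < j → α ^ (q ^ 2) ^ i = α ^ (q ^ 2) ^ j → False := by
      intro i j his hjs hij heq
      have h8 : α ^ (q ^ 2) ^ (i + (s - j)) = α ^ (q ^ 2) ^ (j + (s - j)) := by
        rw [pow_add, pow_add, pow_mul, pow_mul, heq]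
      rw [show j + (s - j) = s by omega, hcardpow] at h8
      exact hfixbound (i + (s - j)) (by omega) (by omega) h8
    intro i j his hjs heq
    rcases lt_trichotomy i j with h | h | h
    · exact absurd heq fun he => key i j his hjs h he
    · exact h
    · exact absurd heq.symm fun he => key j i hjs his h he
  -- all orbit elements and β are roots
  have horb : ∀ i : ℕ, aeval (α ^ (q ^ 2) ^ i) f = 0 := by
    intro i
    induction i with
    | zero => simpa using hαf
    | succ i ih =>
      have hstep : α ^ (q ^ 2) ^ (i + 1) = (α ^ (q ^ 2) ^ i) ^ (q ^ 2) := by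
        rw [pow_succ, pow_mul]
      rw [hstep, hfix, ih]
      exact zero_pow (by positivity)
  have hfKne : f.map (algebraMap F K) ≠ 0 := (hmon.map (algebraMap F K)).ne_zero
  have hmemR : ∀ x : K, aeval x f = 0 → x ∈ (f.map (algebraMap F K)).roots.toFinset := by
    intro x hx
    rw [Multiset.mem_toFinset, mem_roots hfKne, IsRoot.def, eval_map, ← aeval_def]
    exact hx
  have hRcard : (f.map (algebraMap F K)).roots.toFinset.card ≤ s := by
    calc (f.map (algebraMap F K)).roots.toFinset.card
        ≤ Multiset.card (f.map (algebraMap F K)).roots := Multiset.toFinset_card_le _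
      _ ≤ (f.map (algebraMap F K)).natDegree := card_roots' _
      _ = s := hmon.natDegree_map _
  -- β lies in the orbit
  have hβmem : (α⁻¹ ^ q) ∈ Finset.image (fun i : Fin s => α ^ (q ^ 2) ^ (i : ℕ)) Finset.univ := by
    by_contra hβS
    have hsubset : insert (α⁻¹ ^ q)
        (Finset.image (fun i : Fin s => α ^ (q ^ 2) ^ (i : ℕ)) Finset.univ)
        ⊆ (f.map (algebraMap F K)).roots.toFinset := by
      intro x hx
      rcases Finset.mem_insert.mp hx with h | h
      · exact h ▸ hmemR _ hβf
      · obtain ⟨i, _, hi⟩ := Finset.mem_image.mp h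
        exact hi ▸ hmemR _ (horb i)
    have hcard1 : (Finset.image (fun i : Fin s => α ^ (q ^ 2) ^ (i : ℕ)) Finset.univ).card = s := by
      rw [Finset.card_image_of_injective _ fun i j hij =>
        Fin.ext (hinj i j i.isLt j.isLt hij), Finset.card_univ, Fintype.card_fin]
    have := Finset.card_le_card hsubset
    rw [Finset.card_insert_of_notMem hβS, hcard1] at this
    omega
  obtain ⟨i, _, hβi⟩ := Finset.mem_image.mp hβmem
  -- conclude
  set m := orderOf α with hm
  have hmn : m ∣ n := orderOf_dvd_of_pow_eq_one hαn
  have hpow1 : α ^ ((q ^ 2) ^ (i : ℕ) + q) = 1 := by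
    rw [pow_add, hβi, inv_pow, inv_mul_cancel₀ (pow_ne_zero q hα0)]
  have hmdvd : m ∣ (q ^ 2) ^ (i : ℕ) + q := orderOf_dvd_of_pow_eq_one hpow1
  have hfXm : f ∣ (X ^ m - 1 : F[X]) := by
    rw [minpoly.eq_of_irreducible_of_monic hirr hαf hmon]
    apply minpoly.dvd
    rw [map_sub, map_pow, aeval_X, map_one, hm, pow_orderOf_eq_one, sub_self]
  refine ⟨m, hmn, ?_, hfXm⟩
  rcases Nat.eq_zero_or_pos (i : ℕ) with hi0 | hi0
  · exact ⟨1, odd_one, by rw [pow_one, add_comm]; simpa [hi0] using hmdvd⟩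
  · have hmq : Nat.Coprime m q := Nat.Coprime.coprime_dvd_left hmn hnq
    refine ⟨2 * (i : ℕ) - 1, ⟨(i : ℕ) - 1, by omega⟩, ?_⟩
    have hfact : (q ^ 2) ^ (i : ℕ) + q = q * (q ^ (2 * (i : ℕ) - 1) + 1) := by
      obtain ⟨e, he⟩ : ∃ e, 2 * (i : ℕ) - 1 = e := ⟨_, rfl⟩
      rw [← pow_mul, he, show 2 * (i : ℕ) = e + 1 by omega]
      ring
    rw [hfact] at hmdvd
    exact hmq.dvd_of_dvd_mul_left hmdvd

lemma X_pow_sub_one_dvd' {F : Type*} [Field F] {m n : ℕ} (h : m ∣ n) :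
    (X ^ m - 1 : F[X]) ∣ (X ^ n - 1 : F[X]) := by
  obtain ⟨c, rfl⟩ := h
  rw [pow_mul]
  simpa using sub_dvd_pow_sub_pow (X ^ m : F[X]) 1 c

theorem stmt11 {q t : ℕ} (hq : IsPrimePow q)
    {F : Type*} [Field F] [Fintype F] (hF : Fintype.card F = q ^ 2)
    (l r a d : Fin t → ℕ)
    (hl : ∀ i, (l i).Prime) (hlodd : ∀ i, Odd (l i)) (hlq : ∀ i, Nat.Coprime (l i) q)
    (hinj : Function.Injective l) (hr : ∀ i, 0 < r i)
    (hord : ∀ i, orderOf ((q : ZMod (l i))) = 2 ^ (a i) * d i)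
    (hd : ∀ i, Odd (d i))
    (j : Fin t) (hj : a j = 0 ∨ 2 ≤ a j) :
    (scrimFactors F q (∏ i, l i ^ r i)).ncard =
      (scrimFactors F q (∏ i ∈ Finset.univ.erase j, l i ^ r i)).ncard := by
  classical
  set n : ℕ := ∏ i, l i ^ r i with hn
  set n' : ℕ := ∏ i ∈ Finset.univ.erase j, l i ^ r i with hn'
  have hsplit : n = l j ^ r j * n' :=
    (Finset.mul_prod_erase Finset.univ (fun i => l i ^ r i) (Finset.mem_univ j)).symm
  have hn0 : 0 < n := Finset.prod_pos fun i _ => pow_pos (hl i).pos _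
  have hnq : Nat.Coprime n q :=
    Nat.coprime_prod_left_iff.mpr fun i _ => (hlq i).pow_left _
  have hset : scrimFactors F q n = scrimFactors F q n' := by
    ext f
    constructor
    · rintro ⟨hS, hdvd⟩
      refine ⟨hS, ?_⟩
      obtain ⟨m, hmn, ⟨e, he, hme⟩, hfm⟩ :=
        core hq hF hn0 hnq hS.1 hS.2.1 hS.2.2 hdvd
      have hlm : ¬ l j ∣ m := fun h =>
        notdvd (hl j) (hlodd j) (hord j) (hd j) hj he (h.trans hme)
      have hmn' : m ∣ n' := by
        have hcop : Nat.Coprime m (l j ^ r j) :=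
          Nat.Coprime.pow_right _ (((hl j).coprime_iff_not_dvd).mpr hlm).symm
        rw [hsplit] at hmn
        exact hcop.dvd_of_dvd_mul_left hmn
      exact hfm.trans (X_pow_sub_one_dvd' hmn')
    · rintro ⟨hS, hdvd⟩
      exact ⟨hS, hdvd.trans (X_pow_sub_one_dvd' ⟨l j ^ r j, by rw [hsplit]; ring⟩)⟩
  rw [hset]
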